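/- arXiv:2201.02346 — 3 statements merged into one kernel-verified Lean document; each statement's English description precedes it below -/
import Mathlib

section
/- Let S be a semigroup. If the intersection ideal graph Γ(S) is disconnected, then Γ(S) is a null graph, i.e., no two distinct nontrivial left ideals of S are adjacent in Γ(S). -/
/-- `I` is a left ideal of the semigroup `S`: a nonempty subset closed under
left multiplication by arbitrary elements of `S`. -/
def IsLeftIdeal (S : Type*) [Semigroup S] (I : Set S) : Prop :=
  I.Nonempty ∧ ∀ s : S, ∀ x ∈ I, s * x ∈ I

/-- `I` is a nontrivial left ideal of `S`: a left ideal with `I ≠ S`. -/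
def IsNontrivialLeftIdeal (S : Type*) [Semigroup S] (I : Set S) : Prop :=
  IsLeftIdeal S I ∧ I ≠ Set.univ

/-- `I` is a minimal left ideal of `S`: a nontrivial left ideal properly
containing no left ideal of `S`. -/
def IsMinimalLeftIdeal (S : Type*) [Semigroup S] (I : Set S) : Prop :=
  IsNontrivialLeftIdeal S I ∧ ∀ J : Set S, IsLeftIdeal S J → ¬ J ⊂ I

/-- `I` is a maximal left ideal of `S`: a nontrivial left ideal not properly
contained in any nontrivial left ideal of `S`. -/
def IsMaximalLeftIdeal (S : Type*) [Semigroup S] (I : Set S) : Prop :=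
  IsNontrivialLeftIdeal S I ∧ ∀ J : Set S, IsNontrivialLeftIdeal S J → ¬ I ⊂ J

/-- The intersection ideal graph `Γ(S)`: vertices are the nontrivial left ideals of `S`,
two distinct vertices being adjacent iff their intersection is nonempty. -/
def idealGraph (S : Type*) [Semigroup S] :
    SimpleGraph {I : Set S // IsNontrivialLeftIdeal S I} where
  Adj I J := I ≠ J ∧ (I.1 ∩ J.1).Nonempty
  symm := ⟨by
    rintro I J ⟨h1, h2⟩
    exact ⟨h1.symm, by rwa [Set.inter_comm]⟩⟩
  loopless := ⟨by rintro I ⟨h1, -⟩; exact h1 rfl⟩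

/-- If `Γ(S)` is disconnected then it is a null graph. -/
theorem idealGraph_disconnected_null (S : Type*) [Semigroup S]
    (h1 : Nonempty {I : Set S // IsNontrivialLeftIdeal S I})
    (h2 : ¬ (idealGraph S).Connected) :
    ∀ u v : {I : Set S // IsNontrivialLeftIdeal S I}, ¬ (idealGraph S).Adj u v := by

  rintro u v ⟨hne, hint⟩
  apply h2
  haveI := h1
  have reach_of_inter : ∀ a b : {I : Set S // IsNontrivialLeftIdeal S I},
      (a.1 ∩ b.1).Nonempty → (idealGraph S).Reachable a b := by
    intro a b hab
    by_cases hab' : a = b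
    · subst hab'; exact SimpleGraph.Reachable.refl a
    · exact SimpleGraph.Adj.reachable ⟨hab', hab⟩
  have union_ideal : ∀ A B : Set S, IsLeftIdeal S A → IsLeftIdeal S B →
      IsLeftIdeal S (A ∪ B) := by
    intro A B hA hB
    obtain ⟨⟨a, ha⟩, hAc⟩ := hA
    obtain ⟨-, hBc⟩ := hB
    refine ⟨⟨a, Or.inl ha⟩, ?_⟩
    rintro s x (hx | hx)
    · exact Or.inl (hAc s x hx)
    · exact Or.inr (hBc s x hx)
  constructor
  intro x y
  have key : ∀ w, (idealGraph S).Reachable u w := by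
    intro w
    by_contra hw
    have hadj : (idealGraph S).Adj u v := ⟨hne, hint⟩
    have hwv : ¬ (idealGraph S).Reachable v w := fun h =>
      hw (hadj.reachable.trans h)
    have hdisj : ∀ a : {I : Set S // IsNontrivialLeftIdeal S I},
        ¬ (idealGraph S).Reachable a w → a.1 ∩ w.1 = ∅ := by
      intro a ha
      by_contra hd
      exact ha (reach_of_inter a w (Set.nonempty_iff_ne_empty.mpr hd))
    have univ_of : ∀ a : {I : Set S // IsNontrivialLeftIdeal S I},
        ¬ (idealGraph S).Reachable a w → a.1 ∪ w.1 = Set.univ := by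
      intro a ha
      by_contra hU
      have hI : IsNontrivialLeftIdeal S (a.1 ∪ w.1) :=
        ⟨union_ideal _ _ a.2.1 w.2.1, hU⟩
      obtain ⟨xa, hxa⟩ := a.2.1.1
      obtain ⟨xw, hxw⟩ := w.2.1.1
      have r1 : (idealGraph S).Reachable a ⟨_, hI⟩ :=
        reach_of_inter _ _ ⟨xa, hxa, Or.inl hxa⟩
      have r2 : (idealGraph S).Reachable ⟨_, hI⟩ w :=
        reach_of_inter _ _ ⟨xw, Or.inr hxw, hxw⟩
      exact ha (r1.trans r2)
    have huw := univ_of u hw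
    have hvw := univ_of v hwv
    have hdu := hdisj u hw
    have hdv := hdisj v hwv
    have huv : u.1 = v.1 := by
      apply Set.Subset.antisymm
      · intro z hz
        have : z ∈ v.1 ∪ w.1 := hvw ▸ Set.mem_univ z
        rcases this with h | h
        · exact h
        · exact absurd (Set.mem_inter hz h) (by rw [hdu]; exact Set.notMem_empty z)
      · intro z hz
        have : z ∈ u.1 ∪ w.1 := huw ▸ Set.mem_univ z
        rcases this with h | h
        · exact h
        · exact absurd (Set.mem_inter hz h) (by rw [hdv]; exact Set.notMem_empty z)
    exact hne (Subtype.ext huv)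
  exact (key x).symm.trans (key y)
end

section
/- Let S be a semigroup having at least one minimal left ideal, and suppose the intersection ideal graph Γ(S) is connected. Then the diameter of Γ(S) equals 2 if and only if S has at least two minimal left ideals. -/
section Aux

variable {S : Type*} [Semigroup S]

lemma inter_leftIdeal {I J : Set S} (hI : IsLeftIdeal S I) (hJ : IsLeftIdeal S J)
    (h : (I ∩ J).Nonempty) : IsLeftIdeal S (I ∩ J) :=
  ⟨h, fun s x hx => ⟨hI.2 s x hx.1, hJ.2 s x hx.2⟩⟩

lemma union_leftIdeal {I J : Set S} (hI : IsLeftIdeal S I) (hJ : IsLeftIdeal S J) :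
    IsLeftIdeal S (I ∪ J) :=
  ⟨hI.1.mono Set.subset_union_left, fun s x hx =>
    hx.elim (fun h => Or.inl (hI.2 s x h)) (fun h => Or.inr (hJ.2 s x h))⟩

lemma eq_of_minimal_of_subset {M J : Set S} (hM : IsMinimalLeftIdeal S M)
    (hJ : IsLeftIdeal S J) (hsub : J ⊆ M) : J = M := by
  by_contra h
  exact hM.2 J hJ ⟨hsub, fun hle => h (le_antisymm hsub hle)⟩

lemma minimal_disjoint {M N : Set S} (hM : IsMinimalLeftIdeal S M) (hN : IsMinimalLeftIdeal S N)
    (hne : M ≠ N) : ¬ (M ∩ N).Nonempty := by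
  intro h
  have hK : IsLeftIdeal S (M ∩ N) := inter_leftIdeal hM.1.1 hN.1.1 h
  have h1 : M ∩ N = M := eq_of_minimal_of_subset hM hK Set.inter_subset_left
  have h2 : M ∩ N = N := eq_of_minimal_of_subset hN hK Set.inter_subset_right
  exact hne (h1 ▸ h2)

lemma image_mul_leftIdeal {M : Set S} (hM : IsLeftIdeal S M) (a : S) :
    IsLeftIdeal S ((· * a) '' M) := by
  refine ⟨hM.1.image _, ?_⟩
  rintro s x ⟨m, hm, rfl⟩
  refine ⟨s * m, hM.2 s m hm, ?_⟩
  show s * m * a = s * (m * a)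
  exact mul_assoc s m a

lemma image_mul_min {M : Set S} (hM : IsMinimalLeftIdeal S M) (a : S) :
    ∀ J : Set S, IsLeftIdeal S J → ¬ J ⊂ ((· * a) '' M) := by
  intro J hJ hss
  set K : Set S := {m ∈ M | m * a ∈ J} with hKdef
  have hKsub : K ⊆ M := fun m hm => hm.1
  have hKne : K.Nonempty := by
    obtain ⟨j, hj⟩ := hJ.1
    obtain ⟨m, hm, rfl⟩ := hss.1 hj
    exact ⟨m, hm, hj⟩
  have hK : IsLeftIdeal S K := by
    refine ⟨hKne, ?_⟩
    rintro s m ⟨hm1, hm2⟩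
    refine ⟨hM.1.1.2 s m hm1, ?_⟩
    rw [mul_assoc]
    exact hJ.2 s _ hm2
  have hKM : K = M := eq_of_minimal_of_subset hM hK hKsub
  have : ((· * a) '' M) ⊆ J := by
    rintro x ⟨m, hm, rfl⟩
    exact (hKM ▸ hm : m ∈ K).2
  exact hss.2 this

lemma exists_minimal_subset {M A : Set S} (hM : IsMinimalLeftIdeal S M)
    (hA : IsNontrivialLeftIdeal S A) : ∃ N : Set S, IsMinimalLeftIdeal S N ∧ N ⊆ A := by
  obtain ⟨a, ha⟩ := hA.1.1
  have hsub : ((· * a) '' M) ⊆ A := by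
    rintro x ⟨m, hm, rfl⟩
    exact hA.1.2 m a ha
  refine ⟨(· * a) '' M, ⟨⟨image_mul_leftIdeal hM.1.1 a, ?_⟩, image_mul_min hM a⟩, hsub⟩
  intro h
  exact hA.2 (Set.eq_univ_of_univ_subset (h ▸ hsub))

lemma edist_le_two_of_min (hmin : ∃ I : Set S, IsMinimalLeftIdeal S I)
    (hconn : (idealGraph S).Connected)
    (A B : {I : Set S // IsNontrivialLeftIdeal S I}) :
    (idealGraph S).edist A B ≤ 2 := by
  obtain ⟨M, hM⟩ := hmin
  by_cases hAB : A = B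
  · subst hAB; simp
  by_cases hint : (A.1 ∩ B.1).Nonempty
  · have hadj : (idealGraph S).Adj A B := ⟨hAB, hint⟩
    rw [← SimpleGraph.edist_eq_one_iff_adj] at hadj
    rw [hadj]; norm_num
  obtain ⟨NA, hNA, hNAA⟩ := exists_minimal_subset hM A.2
  obtain ⟨NB, hNB, hNBB⟩ := exists_minimal_subset hM B.2
  have hdisj : ∀ x, x ∈ A.1 → x ∈ B.1 → False := fun x h1 h2 => hint ⟨x, h1, h2⟩
  by_cases huniv : NA ∪ NB = Set.univ
  · -- Then A = NA and B = NB; use a neighbor of A from connectedness.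
    have hAeq : A.1 = NA := by
      apply Set.Subset.antisymm _ hNAA
      intro x hx
      rcases (huniv ▸ Set.mem_univ x : x ∈ NA ∪ NB) with h | h
      · exact h
      · exact absurd (hNBB h) (fun hb => hdisj x hx hb)
    have hBeq : B.1 = NB := by
      apply Set.Subset.antisymm _ hNBB
      intro x hx
      rcases (huniv ▸ Set.mem_univ x : x ∈ NA ∪ NB) with h | h
      · exact absurd (hNAA h) (fun ha => hdisj x ha hx)
      · exact h
    obtain ⟨w⟩ := hconn.preconnected A B
    obtain ⟨C, hadj⟩ : ∃ C, (idealGraph S).Adj A C := by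
      cases w with
      | nil => exact absurd rfl hAB
      | cons h p => exact ⟨_, h⟩
    · have hCA : (C.1 ∩ A.1).Nonempty := by
        obtain ⟨x, hx1, hx2⟩ := hadj.2; exact ⟨x, hx2, hx1⟩
      have hCAideal : IsNontrivialLeftIdeal S (C.1 ∩ A.1) := by
        refine ⟨inter_leftIdeal C.2.1 A.2.1 hCA, ?_⟩
        intro h
        exact A.2.2 (Set.eq_univ_of_univ_subset (h ▸ Set.inter_subset_right))
      obtain ⟨N', hN', hN'sub⟩ := exists_minimal_subset hM hCAideal
      have hN'NA : N' = NA := by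
        apply eq_of_minimal_of_subset ⟨hNA.1, hNA.2⟩ hN'.1.1
        exact fun x hx => hAeq ▸ (hN'sub hx).2
      have hAC : A.1 ⊆ C.1 := hAeq ▸ hN'NA ▸ (fun x hx => (hN'sub hx).1)
      have hACne : A.1 ≠ C.1 := fun h => hadj.1 (Subtype.ext h)
      obtain ⟨x, hxC, hxA⟩ := Set.exists_of_ssubset ⟨hAC, fun h => hACne (Set.Subset.antisymm hAC h)⟩
      have hxB : x ∈ B.1 := by
        rcases (huniv ▸ Set.mem_univ x : x ∈ NA ∪ NB) with h | h
        · exact absurd (hAeq ▸ h) hxA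
        · exact hBeq ▸ h
      have hCB : (idealGraph S).Adj C B := by
        refine ⟨fun h => hint ?_, ⟨x, hxC, hxB⟩⟩
        · obtain ⟨y, hy1, hy2⟩ := hadj.2
          exact ⟨y, hy1, h ▸ hy2⟩
      have := SimpleGraph.edist_le (SimpleGraph.Walk.cons hadj (SimpleGraph.Walk.cons hCB SimpleGraph.Walk.nil))
      simpa using this
  · -- NA ∪ NB is a vertex adjacent to both.
    have hC : IsNontrivialLeftIdeal S (NA ∪ NB) :=
      ⟨union_leftIdeal hNA.1.1 hNB.1.1, huniv⟩
    set C : {I : Set S // IsNontrivialLeftIdeal S I} := ⟨NA ∪ NB, hC⟩ with hCdef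
    obtain ⟨a, ha⟩ := hNA.1.1.1
    obtain ⟨b, hb⟩ := hNB.1.1.1
    have hAC : (idealGraph S).Adj A C := by
      refine ⟨fun h => ?_, ⟨a, hNAA ha, Or.inl ha⟩⟩
      have : b ∈ A.1 := by rw [h]; exact Or.inr hb
      exact hdisj b this (hNBB hb)
    have hCB : (idealGraph S).Adj C B := by
      refine ⟨fun h => ?_, ⟨b, Or.inr hb, hNBB hb⟩⟩
      have : a ∈ B.1 := by rw [← h]; exact Or.inl ha
      exact hdisj a (hNAA ha) this
    have := SimpleGraph.edist_le (SimpleGraph.Walk.cons hAC (SimpleGraph.Walk.cons hCB SimpleGraph.Walk.nil))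
    simpa using this

end Aux

/-- Let `S` have a minimal left ideal and suppose `Γ(S)` is connected. Then the
diameter of `Γ(S)` equals `2` iff `S` has at least two minimal left ideals. -/
theorem idealGraph_ediam_eq_two_iff (S : Type*) [Semigroup S]
    (hmin : ∃ I : Set S, IsMinimalLeftIdeal S I)
    (hconn : (idealGraph S).Connected) :
    (idealGraph S).ediam = 2 ↔
      ∃ I J : Set S, IsMinimalLeftIdeal S I ∧ IsMinimalLeftIdeal S J ∧ I ≠ J := by
  constructor
  · intro hdiam
    by_contra h
    push_neg at h
    obtain ⟨M, hM⟩ := hmin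
    -- every vertex contains M
    have hsub : ∀ A : {I : Set S // IsNontrivialLeftIdeal S I}, M ⊆ A.1 := by
      intro A
      obtain ⟨N, hN, hNA⟩ := exists_minimal_subset hM A.2
      have : N = M := h N M hN hM
      exact this ▸ hNA
    have hle : (idealGraph S).ediam ≤ 1 := by
      apply SimpleGraph.ediam_le_of_edist_le
      intro u v
      by_cases huv : u = v
      · subst huv; simp
      · obtain ⟨m, hm⟩ := hM.1.1.1
        have : (idealGraph S).Adj u v := ⟨huv, ⟨m, hsub u hm, hsub v hm⟩⟩
        rw [← SimpleGraph.edist_eq_one_iff_adj] at this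
        exact this.le
    rw [hdiam] at hle
    norm_num at hle
  · rintro ⟨I, J, hI, hJ, hne⟩
    have hle : (idealGraph S).ediam ≤ 2 :=
      SimpleGraph.ediam_le_of_edist_le (edist_le_two_of_min hmin hconn)
    refine le_antisymm hle ?_
    set vI : {K : Set S // IsNontrivialLeftIdeal S K} := ⟨I, hI.1⟩
    set vJ : {K : Set S // IsNontrivialLeftIdeal S K} := ⟨J, hJ.1⟩
    have h0 : (idealGraph S).edist vI vJ ≠ 0 := by
      intro h
      rw [SimpleGraph.edist_eq_zero_iff] at h
      exact hne (congrArg Subtype.val h)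
    have h1 : (idealGraph S).edist vI vJ ≠ 1 := by
      intro h
      rw [SimpleGraph.edist_eq_one_iff_adj] at h
      exact minimal_disjoint hI hJ hne h.2
    have hpos : 0 < (idealGraph S).edist vI vJ := pos_iff_ne_zero.mpr h0
    have h1lt : 1 < (idealGraph S).edist vI vJ :=
      lt_of_le_of_ne (Order.one_le_iff_pos.mpr hpos) (Ne.symm h1)
    have h2 : (2 : ℕ∞) ≤ (idealGraph S).edist vI vJ :=
      (ENat.add_one_le_iff (by decide)).mpr h1lt
    exact h2.trans SimpleGraph.edist_le_ediam
end

section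
/- Let S be a semigroup that is the union of its n minimal left ideals I₁, …, Iₙ, where 2 ≤ n < ∞ (so S = I₁ ∪ ⋯ ∪ Iₙ and I₁, …, Iₙ are exactly the minimal left ideals of S). Then the clique number and the chromatic number of the intersection ideal graph Γ(S) both equal 2^{n−1} − 1. -/
/-- The clique number of `Γ(S)`: the supremum of cardinalities of sets of pairwise
adjacent vertices. -/
noncomputable def cliqueNumber (S : Type*) [Semigroup S] : ℕ∞ :=
  sSup {k : ℕ∞ | ∃ C : Set {I : Set S // IsNontrivialLeftIdeal S I},
    (idealGraph S).IsClique C ∧ C.encard = k}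

open Set


def interGraph (α : Type*) : SimpleGraph {T : Set α // T.Nonempty ∧ T ≠ Set.univ} where
  Adj T U := T ≠ U ∧ (T.1 ∩ U.1).Nonempty
  symm := ⟨by rintro T U ⟨h1, h2⟩; exact ⟨h1.symm, by rwa [Set.inter_comm]⟩⟩
  loopless := ⟨by rintro T ⟨h1, -⟩; exact h1 rfl⟩

section Comb

variable {α : Type*} [Fintype α] (a₀ : α)

/-- The color type: subsets containing `a₀`, other than `univ`. -/
abbrev KType (a₀ : α) := {B : Set α // a₀ ∈ B ∧ B ≠ Set.univ}

noncomputable def kEquiv : KType a₀ ≃ {U : Set {b : α // b ≠ a₀} // U ≠ Set.univ} where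
  toFun B := ⟨{b | (b : α) ∈ B.1}, by
    intro h
    apply B.2.2
    ext a
    simp only [Set.mem_univ, iff_true]
    by_cases ha : a = a₀
    · exact ha ▸ B.2.1
    · have : (⟨a, ha⟩ : {b : α // b ≠ a₀}) ∈ ({b | (b : α) ∈ B.1} : Set {b : α // b ≠ a₀}) := h ▸ Set.mem_univ _
      exact this⟩
  invFun U := ⟨{a | a = a₀ ∨ ∃ h : a ≠ a₀, (⟨a, h⟩ : {b : α // b ≠ a₀}) ∈ U.1},
    Or.inl rfl, by
    intro h
    obtain ⟨u, hu⟩ := (Set.ne_univ_iff_exists_notMem _).1 U.2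
    have : (u : α) ∈ ({a | a = a₀ ∨ ∃ h : a ≠ a₀, (⟨a, h⟩ : {b : α // b ≠ a₀}) ∈ U.1} : Set α) :=
      h ▸ Set.mem_univ _
    rcases this with h1 | ⟨h2, h3⟩
    · exact u.2 h1
    · exact hu (by simpa using h3)⟩
  left_inv B := by
    apply Subtype.ext
    ext a
    simp only [Set.mem_setOf_eq]
    constructor
    · rintro (rfl | ⟨h, hm⟩)
      · exact B.2.1
      · exact hm
    · intro ha
      by_cases h : a = a₀
      · exact Or.inl h
      · exact Or.inr ⟨h, ha⟩
  right_inv U := by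
    apply Subtype.ext
    ext b
    simp only [Set.mem_setOf_eq]
    constructor
    · rintro (h1 | ⟨h2, h3⟩)
      · exact absurd h1 b.2
      · simpa using h3
    · intro hb
      exact Or.inr ⟨b.2, by simpa using hb⟩

lemma card_KType : Nat.card (KType a₀) = 2 ^ (Fintype.card α - 1) - 1 := by
  classical
  rw [Nat.card_congr (kEquiv a₀)]
  have hβ : Fintype.card {b : α // b ≠ a₀} = Fintype.card α - 1 := by
    simp [Fintype.card_subtype_compl]
  have h2 : Nat.card {U : Set {b : α // b ≠ a₀} // U ≠ Set.univ}
      = 2 ^ Fintype.card {b : α // b ≠ a₀} - 1 := by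
    simp [Nat.card_eq_fintype_card, Fintype.card_subtype_compl, Fintype.card_set]
  rw [h2, hβ]



noncomputable def interColoring (a₀ : α) : (interGraph α).Coloring (KType a₀) := by
  classical
  refine SimpleGraph.Coloring.mk
    (fun T => if h : a₀ ∈ T.1 then ⟨T.1, h, T.2.2⟩
      else ⟨T.1ᶜ, h, fun hc => T.2.1.ne_empty (Set.compl_univ_iff.1 hc)⟩) ?_
  intro T U hadj heq
  by_cases h1 : a₀ ∈ T.1 <;> by_cases h2 : a₀ ∈ U.1 <;>
    simp only [h1, h2, dif_pos, dif_neg, not_false_iff, Subtype.mk.injEq] at heq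
  · exact hadj.1 (Subtype.ext heq)
  · obtain ⟨x, hxT, hxU⟩ := hadj.2
    rw [heq] at hxT
    exact hxT hxU
  · obtain ⟨x, hxT, hxU⟩ := hadj.2
    rw [← heq] at hxU
    exact hxU hxT
  · exact hadj.1 (Subtype.ext (compl_injective heq))

/-- The canonical maximum clique: all proper subsets containing `a₀`. -/
def cliqueSet (a₀ : α) : Set {T : Set α // T.Nonempty ∧ T ≠ Set.univ} := {T | a₀ ∈ T.1}

lemma cliqueSet_isClique (a₀ : α) : (interGraph α).IsClique (cliqueSet a₀) :=
  fun T hT U hU hne => ⟨hne, a₀, hT, hU⟩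

noncomputable def cliqueSetEquiv (a₀ : α) : ↥(cliqueSet a₀) ≃ KType a₀ where
  toFun T := ⟨T.1.1, T.2, T.1.2.2⟩
  invFun B := ⟨⟨B.1, ⟨a₀, B.2.1⟩, B.2.2⟩, B.2.1⟩
  left_inv T := by apply Subtype.ext; apply Subtype.ext; rfl
  right_inv B := by apply Subtype.ext; rfl

lemma cliqueSet_encard (a₀ : α) :
    (cliqueSet a₀ : Set _).encard = ((2 ^ (Fintype.card α - 1) - 1 : ℕ) : ℕ∞) := by
  classical
  have h1 : (cliqueSet a₀ : Set _).encard = ENat.card ↥(cliqueSet a₀) := rfl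
  rw [h1, ENat.card_congr (cliqueSetEquiv a₀)]
  letI : Fintype (KType a₀) := Fintype.ofFinite _
  rw [ENat.card_eq_coe_fintype_card, ← Nat.card_eq_fintype_card, card_KType]

lemma interGraph_clique_encard_le [Nonempty α]
    (C : Set {T : Set α // T.Nonempty ∧ T ≠ Set.univ}) (hC : (interGraph α).IsClique C) :
    C.encard ≤ ((2 ^ (Fintype.card α - 1) - 1 : ℕ) : ℕ∞) := by
  classical
  obtain ⟨a₀⟩ := ‹Nonempty α›
  have hinj : Set.InjOn (interColoring a₀) C := by
    intro x hx y hy hxy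
    by_contra hne
    exact (interColoring a₀).valid (hC hx hy hne) hxy
  letI : Fintype (KType a₀) := Fintype.ofFinite _
  calc C.encard = ((interColoring a₀) '' C).encard := (hinj.encard_image).symm
    _ ≤ (Set.univ : Set (KType a₀)).encard := Set.encard_mono (Set.subset_univ _)
    _ = ((2 ^ (Fintype.card α - 1) - 1 : ℕ) : ℕ∞) := by
        rw [Set.encard_univ, ENat.card_eq_coe_fintype_card, ← Nat.card_eq_fintype_card,
          card_KType]

lemma interGraph_chromaticNumber [Nonempty α] :
    (interGraph α).chromaticNumber = ((2 ^ (Fintype.card α - 1) - 1 : ℕ) : ℕ∞) := by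
  classical
  obtain ⟨a₀⟩ := ‹Nonempty α›
  letI : Fintype (KType a₀) := Fintype.ofFinite _
  apply le_antisymm
  · have := (interColoring (α := α) a₀).colorable.chromaticNumber_le
    rwa [← Nat.card_eq_fintype_card, card_KType] at this
  · letI : Fintype ↥(cliqueSet (α := α) a₀) := Fintype.ofFinite _
    have hcl : (interGraph α).IsClique ((cliqueSet a₀).toFinset : Set _) := by
      rw [Set.coe_toFinset]; exact cliqueSet_isClique a₀
    have hcard : ((cliqueSet (α := α) a₀).toFinset.card : ℕ∞)
        = ((2 ^ (Fintype.card α - 1) - 1 : ℕ) : ℕ∞) := by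
      rw [← Set.encard_eq_coe_toFinset_card, cliqueSet_encard]
    calc ((2 ^ (Fintype.card α - 1) - 1 : ℕ) : ℕ∞) = _ := hcard.symm
      _ ≤ (interGraph α).chromaticNumber := hcl.card_le_chromaticNumber

end Comb


section SemigroupPart
variable {S : Type*} [Semigroup S]

lemma minimal_subset_of_inter {I J : Set S} (hI : IsMinimalLeftIdeal S I)
    (hJ : IsLeftIdeal S J) (h : (I ∩ J).Nonempty) : I ⊆ J := by
  have hIJ : IsLeftIdeal S (I ∩ J) :=
    ⟨h, fun s x hx => ⟨hI.1.1.2 s x hx.1, hJ.2 s x hx.2⟩⟩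
  have hnot := hI.2 _ hIJ
  have hsub : I ∩ J ⊆ I := Set.inter_subset_left
  rcases eq_or_lt_of_le hsub with heq | hlt
  · rw [← heq]; exact Set.inter_subset_right
  · exact absurd hlt hnot

lemma minimal_disjoint_s17 {I J : Set S} (hI : IsMinimalLeftIdeal S I)
    (hJ : IsMinimalLeftIdeal S J) (hne : I ≠ J) : I ∩ J = ∅ := by
  by_contra hc
  have h : (I ∩ J).Nonempty := Set.nonempty_iff_ne_empty.2 hc
  have h1 : I ⊆ J := minimal_subset_of_inter hI hJ.1.1 h
  have h2 : J ⊆ I := minimal_subset_of_inter hJ hI.1.1 (by rwa [Set.inter_comm])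
  exact hne (le_antisymm h1 h2)

lemma idealGraph_iso
    (hunion : ⋃₀ {I : Set S | IsMinimalLeftIdeal S I} = Set.univ) :
    Nonempty (idealGraph S ≃g interGraph ↥{I : Set S | IsMinimalLeftIdeal S I}) := by
  set M := {I : Set S | IsMinimalLeftIdeal S I} with hM
  have hmem : ∀ x : S, ∃ I : ↥M, x ∈ (I : Set S) := by
    intro x
    have hx : x ∈ ⋃₀ M := hunion ▸ Set.mem_univ x
    obtain ⟨I, hIM, hxI⟩ := hx
    exact ⟨⟨I, hIM⟩, hxI⟩
  -- the forward map
  have fne : ∀ J : {I : Set S // IsNontrivialLeftIdeal S I},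
      ({I : ↥M | (I : Set S) ⊆ J.1}).Nonempty := by
    intro J
    obtain ⟨x, hx⟩ := J.2.1.1
    obtain ⟨I, hxI⟩ := hmem x
    exact ⟨I, minimal_subset_of_inter I.2 J.2.1 ⟨x, hxI, hx⟩⟩
  have fnuniv : ∀ J : {I : Set S // IsNontrivialLeftIdeal S I},
      ({I : ↥M | (I : Set S) ⊆ J.1}) ≠ Set.univ := by
    intro J h
    apply J.2.2
    apply Set.eq_univ_of_forall
    intro x
    obtain ⟨I, hxI⟩ := hmem x
    have hI : I ∈ {I : ↥M | (I : Set S) ⊆ J.1} := h ▸ Set.mem_univ I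
    exact hI hxI
  set f : {I : Set S // IsNontrivialLeftIdeal S I} → {T : Set ↥M // T.Nonempty ∧ T ≠ Set.univ} :=
    fun J => ⟨{I : ↥M | (I : Set S) ⊆ J.1}, fne J, fnuniv J⟩ with hf
  -- the inverse map
  have gideal : ∀ T : {T : Set ↥M // T.Nonempty ∧ T ≠ Set.univ},
      IsNontrivialLeftIdeal S (⋃ I ∈ T.1, (I : Set S)) := by
    intro T
    refine ⟨⟨?_, ?_⟩, ?_⟩
    · obtain ⟨I, hI⟩ := T.2.1
      obtain ⟨x, hx⟩ := I.2.1.1.1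
      exact ⟨x, Set.mem_biUnion hI hx⟩
    · intro s x hx
      rw [Set.mem_iUnion₂] at hx ⊢
      obtain ⟨I, hIT, hxI⟩ := hx
      exact ⟨I, hIT, I.2.1.1.2 s x hxI⟩
    · obtain ⟨I₀, hI₀⟩ := (Set.ne_univ_iff_exists_notMem _).1 T.2.2
      obtain ⟨x₀, hx₀⟩ := I₀.2.1.1.1
      rw [Set.ne_univ_iff_exists_notMem]
      refine ⟨x₀, fun hx => ?_⟩
      rw [Set.mem_iUnion₂] at hx
      obtain ⟨I, hIT, hxI⟩ := hx
      have hne : (I : Set S) ≠ (I₀ : Set S) := by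
        intro hval
        exact hI₀ (Subtype.ext hval ▸ hIT)
      have hd := minimal_disjoint_s17 I.2 I₀.2 hne
      have hmem2 : x₀ ∈ (I : Set S) ∩ (I₀ : Set S) := ⟨hxI, hx₀⟩
      rw [hd] at hmem2
      exact hmem2
  set g : {T : Set ↥M // T.Nonempty ∧ T ≠ Set.univ} → {I : Set S // IsNontrivialLeftIdeal S I} :=
    fun T => ⟨⋃ I ∈ T.1, (I : Set S), gideal T⟩ with hg
  have hleft : Function.LeftInverse g f := by
    intro J
    apply Subtype.ext
    ext x
    simp only [hg, hf, Set.mem_iUnion₂]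
    constructor
    · rintro ⟨I, hI, hxI⟩
      exact hI hxI
    · intro hx
      obtain ⟨I, hxI⟩ := hmem x
      exact ⟨I, minimal_subset_of_inter I.2 J.2.1 ⟨x, hxI, hx⟩, hxI⟩
  have hright : Function.RightInverse g f := by
    intro T
    apply Subtype.ext
    ext I
    simp only [hg, hf, Set.mem_setOf_eq]
    constructor
    · intro hsub
      obtain ⟨x, hx⟩ := I.2.1.1.1
      have hx' := hsub hx
      rw [Set.mem_iUnion₂] at hx'
      obtain ⟨I', hI'T, hxI'⟩ := hx'
      have : I = I' := by
        by_contra hne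
        have hne' : (I : Set S) ≠ (I' : Set S) := fun hval => hne (Subtype.ext hval)
        have hd := minimal_disjoint_s17 I.2 I'.2 hne'
        have hmem2 : x ∈ (I : Set S) ∩ (I' : Set S) := ⟨hx, hxI'⟩
        rw [hd] at hmem2
        exact hmem2
      exact this ▸ hI'T
    · intro hIT
      exact Set.subset_iUnion₂ (s := fun (I : ↥M) (_ : I ∈ T.1) => (I : Set S)) I hIT
  refine ⟨⟨⟨f, g, hleft, hright⟩, ?_⟩⟩
  intro J₁ J₂
  show (f J₁ ≠ f J₂ ∧ ((f J₁).1 ∩ (f J₂).1).Nonempty) ↔ _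
  constructor
  · rintro ⟨hne, I, h1, h2⟩
    refine ⟨fun h => hne (h ▸ rfl), ?_⟩
    obtain ⟨x, hx⟩ := I.2.1.1.1
    exact ⟨x, h1 hx, h2 hx⟩
  · rintro ⟨hne, x, hx1, hx2⟩
    refine ⟨fun h => hne (hleft.injective (by rw [h])), ?_⟩
    obtain ⟨I, hxI⟩ := hmem x
    exact ⟨I, minimal_subset_of_inter I.2 J₁.2.1 ⟨x, hxI, hx1⟩,
      minimal_subset_of_inter I.2 J₂.2.1 ⟨x, hxI, hx2⟩⟩

end SemigroupPart


lemma iso_clique_image {V W : Type*} {G : SimpleGraph V} {G' : SimpleGraph W} (e : G ≃g G')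
    {C : Set V} (hC : G.IsClique C) : G'.IsClique (⇑e '' C) := by
  rintro x ⟨a, ha, rfl⟩ y ⟨b, hb, rfl⟩ hxy
  have hab : a ≠ b := fun h => hxy (by rw [h])
  exact e.map_rel_iff.2 (hC ha hb hab)

set_option maxHeartbeats 1000000 in
/-- If `S` is the union of its `n` minimal left ideals (`2 ≤ n < ∞`), then the clique
number and chromatic number of `Γ(S)` both equal `2^(n-1) - 1`. -/
theorem cliqueNumber_chromaticNumber_eq (S : Type*) [Semigroup S] (n : ℕ) (hn : 2 ≤ n)
    (hcard : {I : Set S | IsMinimalLeftIdeal S I}.encard = n)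
    (hunion : ⋃₀ {I : Set S | IsMinimalLeftIdeal S I} = Set.univ) :
    cliqueNumber S = (2 ^ (n - 1) - 1 : ℕ) ∧
      (idealGraph S).chromaticNumber = (2 ^ (n - 1) - 1 : ℕ) := by
  classical
  set M := {I : Set S | IsMinimalLeftIdeal S I} with hM
  have hfin : M.Finite := Set.finite_of_encard_eq_coe hcard
  letI : Fintype ↥M := hfin.fintype
  have hcardM : Fintype.card ↥M = n := by
    have h1 : (M.ncard : ℕ∞) = (n : ℕ∞) := by rw [hfin.cast_ncard_eq, hcard]
    have h2 : M.ncard = n := by exact_mod_cast h1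
    rw [← h2, Set.ncard_eq_toFinset_card', Set.toFinset_card]
  haveI : Nonempty ↥M := by
    rw [← Fintype.card_pos_iff, hcardM]; omega
  obtain ⟨e⟩ := idealGraph_iso hunion
  constructor
  · rw [cliqueNumber]
    apply le_antisymm
    · apply sSup_le
      rintro k ⟨C, hC, rfl⟩
      have hC' : (interGraph ↥M).IsClique (⇑e '' C) := iso_clique_image e hC
      have hle := interGraph_clique_encard_le (⇑e '' C) hC'
      rw [Set.InjOn.encard_image (e.injective.injOn), hcardM] at hle
      exact hle
    · apply le_sSup
      obtain ⟨a₀⟩ := (inferInstance : Nonempty ↥M)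
      refine ⟨⇑e.symm '' (cliqueSet a₀), iso_clique_image e.symm (cliqueSet_isClique a₀), ?_⟩
      rw [Set.InjOn.encard_image (e.symm.injective.injOn)]
      rw [cliqueSet_encard a₀, hcardM]
  · have h1 := SimpleGraph.chromaticNumber_mono_of_hom e.toEmbedding.toHom
    have h2 := SimpleGraph.chromaticNumber_mono_of_hom e.symm.toEmbedding.toHom
    have heq : (idealGraph S).chromaticNumber = (interGraph ↥M).chromaticNumber :=
      le_antisymm h1 h2
    rw [heq, interGraph_chromaticNumber, hcardM]
end
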